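/- Let y_i = (-1)^i (1, i, i^2, …, i^N) ∈ ℝ^{N+1} for i = 1,…,n with n > N. For any choice of N indices i_1 < … < i_N and any two remaining indices j < j' that are consecutive among the remaining indices, the determinants det(y_j, y_{i_1}, …, y_{i_N}) and det(y_{j'}, y_{i_1}, …, y_{i_N}) have opposite signs (both nonzero). -/
import Mathlib


/-- The Vandermonde-type vector `y i = (-1)^i • (1, i, i², …, i^N)`. -/
noncomputable def vanderRow (N : ℕ) (i : ℕ) : Fin (N + 1) → ℝ :=
  fun j => (-1 : ℝ) ^ i * (i : ℝ) ^ (j : ℕ)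

lemma det_vander_cons (N : ℕ) (f : Fin N → ℕ) (j : ℕ) :
    (Matrix.of (Fin.cons (vanderRow N j) (fun r => vanderRow N (f r)))).det
    = ((-1:ℝ)^j * ∏ r, (-1:ℝ)^(f r)) *
      ((∏ r, ((f r : ℝ) - j)) *
        ∏ i : Fin N, ∏ k ∈ Finset.Ioi i, ((f k : ℝ) - f i)) := by
  set w : Fin (N+1) → ℝ := Fin.cons ((-1:ℝ)^j) (fun r => (-1:ℝ)^(f r)) with hw
  set v : Fin (N+1) → ℝ := Fin.cons ((j:ℝ)) (fun r => (f r : ℝ)) with hv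
  have h : (Matrix.of (Fin.cons (vanderRow N j) (fun r => vanderRow N (f r)))) =
      Matrix.of (fun a b => w a * Matrix.vandermonde v a b) := by
    ext a b
    refine Fin.cases ?_ ?_ a <;> simp [vanderRow, Matrix.vandermonde, hw, hv]
  rw [h, Matrix.det_mul_column, Matrix.det_vandermonde]
  congr 1
  · rw [Fin.prod_univ_succ]; simp [hw]
  · rw [Fin.prod_univ_succ, Fin.prod_Ioi_zero]
    congr 1
    refine Finset.prod_congr rfl fun i _ => ?_
    rw [Fin.prod_Ioi_succ]
    simp [hv]

theorem stmt_5 (N n : ℕ) (hn : N < n)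
    (s : Finset ℕ) (hs : s ⊆ Finset.Icc 1 n) (hcard : s.card = N)
    (j j' : ℕ) (hj : j ∈ Finset.Icc 1 n) (hj' : j' ∈ Finset.Icc 1 n)
    (hjs : j ∉ s) (hj's : j' ∉ s) (hlt : j < j')
    (hconsec : ∀ k, j < k → k < j' → k ∈ s) :
    (Matrix.of (Fin.cons (vanderRow N j)
        (fun r : Fin N => vanderRow N ((s.orderIsoOfFin hcard r : ℕ))))).det *
      (Matrix.of (Fin.cons (vanderRow N j')
        (fun r : Fin N => vanderRow N ((s.orderIsoOfFin hcard r : ℕ))))).det < 0 := by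
  set f : Fin N → ℕ := fun r => (s.orderIsoOfFin hcard r : ℕ) with hf
  rw [det_vander_cons N f j, det_vander_cons N f j']
  set E : ℝ := ∏ r, (-1:ℝ)^(f r) with hE
  set P : ℝ := ∏ i : Fin N, ∏ k ∈ Finset.Ioi i, ((f k : ℝ) - f i) with hP
  set A : ℝ := ∏ r, ((f r : ℝ) - j) with hA
  set A' : ℝ := ∏ r, ((f r : ℝ) - j') with hA'
  -- E * E = 1
  have hEE : E * E = 1 := by
    rw [hE, ← Finset.prod_mul_distrib]
    refine Finset.prod_eq_one fun r _ => ?_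
    rw [← pow_add]
    exact Even.neg_one_pow ⟨f r, rfl⟩
  -- P > 0
  have hPpos : 0 < P := by
    refine Finset.prod_pos fun i _ => Finset.prod_pos fun k hk => ?_
    have hik : i < k := Finset.mem_Ioi.mp hk
    have : f i < f k := by
      have := (s.orderIsoOfFin hcard).strictMono hik
      exact_mod_cast this
    have : (f i : ℝ) < f k := by exact_mod_cast this
    linarith
  -- A * A' = ∏ over s of g
  set g : ℕ → ℝ := fun k => ((k:ℝ) - j) * ((k:ℝ) - j') with hg
  have hAA : A * A' = ∏ k ∈ s, g k := by
    rw [hA, hA', ← Finset.prod_mul_distrib]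
    rw [← Finset.prod_coe_sort s g]
    exact Fintype.prod_equiv (s.orderIsoOfFin hcard).toEquiv
      (fun r => g (f r)) (fun x => g x) (fun r => rfl)
  -- the sign computation
  have hsub : Finset.Ioo j j' ⊆ s := fun k hk => by
    have := Finset.mem_Ioo.mp hk; exact hconsec k this.1 this.2
  have hsplit : ∏ k ∈ s, g k = (∏ k ∈ s \ Finset.Ioo j j', g k) * ∏ k ∈ Finset.Ioo j j', g k :=
    (Finset.prod_sdiff hsub).symm
  have hpos1 : 0 < ∏ k ∈ s \ Finset.Ioo j j', g k := by
    refine Finset.prod_pos fun k hk => ?_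
    obtain ⟨hks, hknotIoo⟩ := Finset.mem_sdiff.mp hk
    have hkj : k ≠ j := fun h => hjs (h ▸ hks)
    have hkj' : k ≠ j' := fun h => hj's (h ▸ hks)
    rw [Finset.mem_Ioo] at hknotIoo
    push_neg at hknotIoo
    rcases lt_or_gt_of_ne hkj with h1 | h1
    · have h2 : k < j' := lt_trans h1 hlt
      have c1 : (k:ℝ) - j < 0 := by
        have : (k:ℝ) < j := by exact_mod_cast h1
        linarith
      have c2 : (k:ℝ) - j' < 0 := by
        have : (k:ℝ) < j' := by exact_mod_cast h2
        linarith
      exact mul_pos_of_neg_of_neg c1 c2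
    · have h2 : j' < k := lt_of_le_of_ne (hknotIoo h1) (Ne.symm hkj')
      have c1 : (0:ℝ) < (k:ℝ) - j := by
        have : (j:ℝ) < k := by exact_mod_cast h1
        linarith
      have c2 : (0:ℝ) < (k:ℝ) - j' := by
        have : (j':ℝ) < k := by exact_mod_cast h2
        linarith
      exact mul_pos c1 c2
  have hneg2 : ∏ k ∈ Finset.Ioo j j', g k
      = (-1:ℝ)^(j' - j - 1) * ∏ k ∈ Finset.Ioo j j', (-(g k)) := by
    rw [← Nat.card_Ioo j j', ← Finset.prod_const, ← Finset.prod_mul_distrib]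
    exact Finset.prod_congr rfl fun k _ => by ring
  have hpos2 : 0 < ∏ k ∈ Finset.Ioo j j', (-(g k)) := by
    refine Finset.prod_pos fun k hk => ?_
    obtain ⟨h1, h2⟩ := Finset.mem_Ioo.mp hk
    have c1 : (0:ℝ) < (k:ℝ) - j := by
      have : (j:ℝ) < k := by exact_mod_cast h1
      linarith
    have c2 : (k:ℝ) - j' < 0 := by
      have : (k:ℝ) < j' := by exact_mod_cast h2
      linarith
    have hlt0 : g k < 0 := mul_neg_of_pos_of_neg c1 c2
    linarith
  have hodd : Odd (j + j' + (j' - j - 1)) := ⟨j' - 1, by omega⟩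
  have hsign : ((-1:ℝ)^(j+j')) * ((-1:ℝ)^(j'-j-1)) = -1 := by
    rw [← pow_add]
    exact Odd.neg_one_pow hodd
  have hT : (-1:ℝ)^(j+j') * (A * A') < 0 := by
    rw [hAA, hsplit, hneg2]
    have : (-1:ℝ)^(j+j') * ((∏ k ∈ s \ Finset.Ioo j j', g k) *
        ((-1:ℝ)^(j' - j - 1) * ∏ k ∈ Finset.Ioo j j', (-(g k))))
        = (((-1:ℝ)^(j+j')) * ((-1:ℝ)^(j'-j-1))) *
          ((∏ k ∈ s \ Finset.Ioo j j', g k) * ∏ k ∈ Finset.Ioo j j', (-(g k))) := by ring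
    rw [this, hsign]
    have := mul_pos hpos1 hpos2
    linarith
  have key : ((-1:ℝ)^j * E) * (A * P) * (((-1:ℝ)^j' * E) * (A' * P))
      = (E * E) * ((P * P) * ((-1:ℝ)^(j+j') * (A * A'))) := by
    rw [pow_add]; ring
  rw [key, hEE, one_mul]
  exact mul_neg_of_pos_of_neg (mul_pos hPpos hPpos) hT
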